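/- Let m∈{2,3}, let n satisfy (Cond-n), and let s₂≥0. Then there exist constants C>0 and c>0, depending only on η, m, n and s₂, such that for all t>0 and all ξ∈ℝ: (1+|ξ|²)^{s₂} · |exp(φ_{m,n}(ξ)t)|² ≤ C·e^{ct}·t^{−2αs₂}. (This is the frequency-side form of the smoothing estimate ‖K_{m,n}(t,·)∗ψ‖_{H^{s₁+s₂}} ≤ C e^{ct} t^{−αs₂} ‖ψ‖_{H^{s₁}}.) -/

import Mathlib

open MeasureTheory

/-- The dissipative symbol `φ_{m,n}(ξ) = −η(i^{n+1}|ξ|ξ^{n−1} + |ξ|^m)`. -/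
noncomputable def phi (η : ℝ) (m n : ℕ) (ξ : ℝ) : ℂ :=
  -(η : ℂ) * (Complex.I ^ (n + 1) * ((|ξ| : ℝ) : ℂ) * (ξ : ℂ) ^ (n - 1)
    + ((|ξ| : ℝ) : ℂ) ^ m)

/-- The kernel `K_{m,n}(t,x) = ∫_ℝ e^{2πixξ} e^{−ip(ξ)ξt+φ_{m,n}(ξ)t} dξ`. -/
noncomputable def Ker (η : ℝ) (m n : ℕ) (p : ℝ → ℝ) (t x : ℝ) : ℂ :=
  ∫ ξ : ℝ, Complex.exp (2 * (Real.pi : ℂ) * Complex.I * (x : ℂ) * (ξ : ℂ)) *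
    Complex.exp (-Complex.I * (p ξ : ℂ) * (ξ : ℂ) * (t : ℂ) + phi η m n ξ * (t : ℂ))

/-- The parameter `α`: `α = 1/m` if `n = 1` or `n` is even, and `α = 1/n` if `n ≥ 3` is odd. -/
noncomputable def alph (m n : ℕ) : ℝ :=
  if n = 1 ∨ Even n then 1 / (m : ℝ) else 1 / (n : ℝ)

/-- `u^γ e^{-u}` is bounded by `⌈γ⌉! + 1` for `u ≥ 0`, `γ ≥ 0`. -/
lemma rpow_mul_exp_neg_le (γ : ℝ) (hγ : 0 ≤ γ) {u : ℝ} (hu : 0 ≤ u) :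
    u ^ γ * Real.exp (-u) ≤ (Nat.factorial (Nat.ceil γ) : ℝ) + 1 := by
  have hfac : (1:ℝ) ≤ (Nat.factorial (Nat.ceil γ) : ℝ) := by
    exact_mod_cast Nat.one_le_iff_ne_zero.mpr (Nat.factorial_ne_zero _)
  rcases le_total u 1 with h | h
  · have h1 : u ^ γ ≤ 1 := Real.rpow_le_one hu h hγ
    have h2 : Real.exp (-u) ≤ 1 := Real.exp_le_one_iff.mpr (by linarith)
    have h3 : 0 ≤ u ^ γ := Real.rpow_nonneg hu γ
    nlinarith [Real.exp_pos (-u)]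
  · have h1 : u ^ γ ≤ u ^ (Nat.ceil γ : ℝ) :=
      Real.rpow_le_rpow_of_exponent_le h (Nat.le_ceil γ)
    rw [Real.rpow_natCast] at h1
    have h2 : u ^ (Nat.ceil γ) ≤ (Nat.factorial (Nat.ceil γ) : ℝ) * Real.exp u := by
      have h0 : (0:ℝ) ≤ u := by linarith
      have := Real.pow_div_factorial_le_exp (x := u) h0 (Nat.ceil γ)
      rw [div_le_iff₀ (by positivity)] at this
      linarith [this]
    calc u ^ γ * Real.exp (-u)
        ≤ ((Nat.factorial (Nat.ceil γ) : ℝ) * Real.exp u) * Real.exp (-u) := by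
          apply mul_le_mul_of_nonneg_right (le_trans h1 h2) (Real.exp_pos _).le
      _ = (Nat.factorial (Nat.ceil γ) : ℝ) := by rw [mul_assoc, ← Real.exp_add]; simp
      _ ≤ (Nat.factorial (Nat.ceil γ) : ℝ) + 1 := by linarith

/-- The key analytic estimate: `(1+x²)^{s₂} e^{-a x^b t} ≤ C e^{ct} t^{-2s₂/b}`. -/
lemma key_lemma (a : ℝ) (ha : 0 < a) (b : ℕ) (hb : 1 ≤ b) (s₂ : ℝ) (hs₂ : 0 ≤ s₂) :
    ∃ C > (0:ℝ), ∃ c > (0:ℝ), ∀ t : ℝ, 0 < t → ∀ x : ℝ, 0 ≤ x →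
      (1 + x ^ 2) ^ s₂ * Real.exp (-(a * x ^ b * t)) ≤
        C * Real.exp (c * t) * t ^ (-(2 * s₂ / b)) := by
  set γ : ℝ := 2 * s₂ / b with hγdef
  have hbpos : (0:ℝ) < b := by exact_mod_cast hb
  have hγ : 0 ≤ γ := by positivity
  set M : ℝ := (Nat.factorial (Nat.ceil γ) : ℝ) + 1 with hMdef
  have hM : 1 ≤ M := by
    have : (1:ℝ) ≤ (Nat.factorial (Nat.ceil γ) : ℝ) := by
      exact_mod_cast Nat.one_le_iff_ne_zero.mpr (Nat.factorial_ne_zero _)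
    simp only [hMdef]; linarith
  have haγ : (0:ℝ) < a ^ (-γ) := Real.rpow_pos_of_pos ha _
  refine ⟨(2:ℝ) ^ s₂ * (1 + M * a ^ (-γ)), by positivity, γ + 1, by positivity,
    fun t ht x hx => ?_⟩
  have htγ : (0:ℝ) < t ^ (-γ) := Real.rpow_pos_of_pos ht _
  have hexp1 : (1:ℝ) ≤ Real.exp ((γ + 1) * t) := by
    rw [show (1:ℝ) = Real.exp 0 by simp]
    exact Real.exp_le_exp.mpr (by positivity)
  have hbig : 1 ≤ Real.exp ((γ + 1) * t) * t ^ (-γ) := by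
    have hlog : Real.log t ≤ t := le_trans (Real.log_le_sub_one_of_pos ht) (by linarith)
    have h1 : Real.exp (-(γ * t)) ≤ t ^ (-γ) := by
      rw [Real.rpow_def_of_pos ht]
      apply Real.exp_le_exp.mpr
      nlinarith
    calc (1:ℝ) ≤ Real.exp t := by nlinarith [Real.add_one_le_exp t]
      _ = Real.exp ((γ + 1) * t) * Real.exp (-(γ * t)) := by
          rw [← Real.exp_add]; ring_nf
      _ ≤ Real.exp ((γ + 1) * t) * t ^ (-γ) :=
          mul_le_mul_of_nonneg_left h1 (Real.exp_pos _).le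
  rcases le_total x 1 with hx1 | hx1
  · -- small x
    have h1 : (1 + x ^ 2) ^ s₂ ≤ (2:ℝ) ^ s₂ :=
      Real.rpow_le_rpow (by positivity) (by nlinarith) hs₂
    have h2 : Real.exp (-(a * x ^ b * t)) ≤ 1 :=
      Real.exp_le_one_iff.mpr (neg_nonpos.mpr (by positivity))
    have h3 : (0:ℝ) < (2:ℝ) ^ s₂ := by positivity
    have h4 : (1 + x ^ 2) ^ s₂ * Real.exp (-(a * x ^ b * t)) ≤ (2:ℝ) ^ s₂ := by
      calc (1 + x ^ 2) ^ s₂ * Real.exp (-(a * x ^ b * t)) ≤ (2:ℝ) ^ s₂ * 1 :=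
            mul_le_mul h1 h2 (Real.exp_pos _).le h3.le
        _ = (2:ℝ) ^ s₂ := mul_one _
    have h5 : (2:ℝ) ^ s₂ ≤ (2:ℝ) ^ s₂ * (1 + M * a ^ (-γ)) := by
      have hp := mul_pos (show (0:ℝ) < M by linarith) haγ
      nlinarith
    calc (1 + x ^ 2) ^ s₂ * Real.exp (-(a * x ^ b * t))
        ≤ (2:ℝ) ^ s₂ * (1 + M * a ^ (-γ)) := le_trans h4 h5
      _ = (2:ℝ) ^ s₂ * (1 + M * a ^ (-γ)) * 1 := (mul_one _).symm
      _ ≤ (2:ℝ) ^ s₂ * (1 + M * a ^ (-γ)) * (Real.exp ((γ + 1) * t) * t ^ (-γ)) := by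
          apply mul_le_mul_of_nonneg_left hbig (by positivity)
      _ = (2:ℝ) ^ s₂ * (1 + M * a ^ (-γ)) * Real.exp ((γ + 1) * t) * t ^ (-γ) := by ring
  · -- large x
    have hxpos : (0:ℝ) < x := lt_of_lt_of_le one_pos hx1
    set u : ℝ := a * x ^ b * t with hudef
    have hupos : 0 < u := by positivity
    have hxb : (x:ℝ) ^ (b:ℝ) = x ^ b := Real.rpow_natCast x b
    have step1 : (1 + x ^ 2) ^ s₂ ≤ (2:ℝ) ^ s₂ * (x ^ b) ^ γ := by
      have h1 : (1 + x ^ 2) ^ s₂ ≤ (2 * x ^ 2) ^ s₂ :=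
        Real.rpow_le_rpow (by positivity) (by nlinarith) hs₂
      have h2 : ((2:ℝ) * x ^ 2) ^ s₂ = (2:ℝ) ^ s₂ * (x ^ 2) ^ s₂ :=
        Real.mul_rpow (by norm_num) (by positivity)
      have h3 : ((x:ℝ) ^ 2) ^ s₂ = x ^ (2 * s₂) := by
        rw [← Real.rpow_natCast x 2, ← Real.rpow_mul hx]
        norm_num
      have h4 : x ^ (2 * s₂) = (x ^ b) ^ γ := by
        rw [← hxb, ← Real.rpow_mul hx]
        congr 1
        rw [hγdef]
        field_simp
      rw [h2, h3, h4] at h1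
      exact h1
    have step2 : (x ^ b) ^ γ * Real.exp (-u) ≤ M * a ^ (-γ) * t ^ (-γ) := by
      have hxbpos : (0:ℝ) < x ^ b := pow_pos hxpos b
      have hat : u ^ γ = (a * t) ^ γ * (x ^ b) ^ γ := by
        rw [← Real.mul_rpow (by positivity) hxbpos.le]
        congr 1; rw [hudef]; ring
      have hatpos : (0:ℝ) < (a * t) ^ γ := Real.rpow_pos_of_pos (by positivity) _
      have hub := rpow_mul_exp_neg_le γ hγ hupos.le
      have heq : (x ^ b) ^ γ * Real.exp (-u) = u ^ γ * Real.exp (-u) / (a * t) ^ γ := by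
        rw [hat]; field_simp
      rw [heq, div_le_iff₀ hatpos]
      have hrhs : M * a ^ (-γ) * t ^ (-γ) * (a * t) ^ γ = M := by
        rw [Real.mul_rpow ha.le ht.le, Real.rpow_neg ha.le, Real.rpow_neg ht.le]
        field_simp
      rw [hrhs]
      exact hub
    have hfin : (1 + x ^ 2) ^ s₂ * Real.exp (-u) ≤ (2:ℝ) ^ s₂ * (M * a ^ (-γ) * t ^ (-γ)) := by
      calc (1 + x ^ 2) ^ s₂ * Real.exp (-u)
          ≤ ((2:ℝ) ^ s₂ * (x ^ b) ^ γ) * Real.exp (-u) :=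
            mul_le_mul_of_nonneg_right step1 (Real.exp_pos _).le
        _ = (2:ℝ) ^ s₂ * ((x ^ b) ^ γ * Real.exp (-u)) := by ring
        _ ≤ (2:ℝ) ^ s₂ * (M * a ^ (-γ) * t ^ (-γ)) :=
            mul_le_mul_of_nonneg_left step2 (by positivity)
    calc (1 + x ^ 2) ^ s₂ * Real.exp (-(a * x ^ b * t))
        ≤ (2:ℝ) ^ s₂ * (M * a ^ (-γ) * t ^ (-γ)) := hfin
      _ = ((2:ℝ) ^ s₂ * (M * a ^ (-γ))) * t ^ (-γ) := by ring
      _ ≤ ((2:ℝ) ^ s₂ * (1 + M * a ^ (-γ))) * t ^ (-γ) := by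
          refine mul_le_mul_of_nonneg_right ?_ htγ.le
          refine mul_le_mul_of_nonneg_left ?_ (by positivity)
          linarith
      _ ≤ ((2:ℝ) ^ s₂ * (1 + M * a ^ (-γ))) * Real.exp ((γ + 1) * t) * t ^ (-γ) := by
          refine mul_le_mul_of_nonneg_right ?_ htγ.le
          exact le_mul_of_one_le_right (by positivity) hexp1
      _ = (2:ℝ) ^ s₂ * (1 + M * a ^ (-γ)) * Real.exp ((γ + 1) * t) * t ^ (-γ) := by ring

/-- Bridge lemma: a pointwise bound `2 Re φ ≤ c₁ − a|ξ|^b` with `α = 1/b` gives the result. -/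
lemma main_aux (η : ℝ) (m n b : ℕ) (hb : 1 ≤ b)
    (halph : alph m n = 1 / (b : ℝ))
    (a c₁ : ℝ) (ha : 0 < a) (hc₁ : 0 ≤ c₁)
    (hpt : ∀ ξ : ℝ, 2 * (phi η m n ξ).re ≤ c₁ - a * |ξ| ^ b)
    (s₂ : ℝ) (hs₂ : 0 ≤ s₂) :
    ∃ C > (0 : ℝ), ∃ c > (0 : ℝ), ∀ t : ℝ, 0 < t → ∀ ξ : ℝ,
      (1 + |ξ| ^ 2) ^ s₂ * ‖Complex.exp (phi η m n ξ * (t : ℂ))‖ ^ 2 ≤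
        C * Real.exp (c * t) * t ^ (-(2 * alph m n * s₂)) := by
  obtain ⟨C, hC, c₀, hc₀, hkey⟩ := key_lemma a ha b hb s₂ hs₂
  have hbne : (b:ℝ) ≠ 0 := by positivity
  have hexpo : -(2 * alph m n * s₂) = -(2 * s₂ / b) := by
    rw [halph]; field_simp
  refine ⟨C, hC, c₀ + c₁, by positivity, fun t ht ξ => ?_⟩
  have habs : ‖Complex.exp (phi η m n ξ * (t : ℂ))‖ ^ 2
      = Real.exp (2 * (phi η m n ξ).re * t) := by
    rw [Complex.norm_exp, ← Real.exp_nat_mul]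
    congr 1
    simp [Complex.mul_re]
    ring
  rw [habs, hexpo]
  have h1 : Real.exp (2 * (phi η m n ξ).re * t) ≤
      Real.exp (c₁ * t) * Real.exp (-(a * |ξ| ^ b * t)) := by
    rw [← Real.exp_add]
    apply Real.exp_le_exp.mpr
    nlinarith [hpt ξ, ht.le]
  calc (1 + |ξ| ^ 2) ^ s₂ * Real.exp (2 * (phi η m n ξ).re * t)
      ≤ (1 + |ξ| ^ 2) ^ s₂ * (Real.exp (c₁ * t) * Real.exp (-(a * |ξ| ^ b * t))) :=
        mul_le_mul_of_nonneg_left h1 (by positivity)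
    _ = Real.exp (c₁ * t) * ((1 + |ξ| ^ 2) ^ s₂ * Real.exp (-(a * |ξ| ^ b * t))) := by ring
    _ ≤ Real.exp (c₁ * t) * (C * Real.exp (c₀ * t) * t ^ (-(2 * s₂ / b))) :=
        mul_le_mul_of_nonneg_left (hkey t ht |ξ| (abs_nonneg ξ)) (Real.exp_pos _).le
    _ = C * Real.exp ((c₀ + c₁) * t) * t ^ (-(2 * s₂ / b)) := by
        rw [show (c₀ + c₁) * t = c₁ * t + c₀ * t by ring, Real.exp_add]; ring

/-- Frequency-side form of the smoothing estimate (Lemma 3):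
`(1+|ξ|²)^{s₂}·|exp(φ_{m,n}(ξ)t)|² ≤ C e^{ct} t^{−2αs₂}`. -/
theorem smoothing_frequency (η : ℝ) (hη : 0 < η) (m : ℕ) (hm : m = 2 ∨ m = 3)
    (n : ℕ) (hn : 1 ≤ n) (hCond : ∀ d : ℕ, n ≠ 5 + 4 * d)
    (s₂ : ℝ) (hs₂ : 0 ≤ s₂) :
    ∃ C > (0 : ℝ), ∃ c > (0 : ℝ), ∀ t : ℝ, 0 < t → ∀ ξ : ℝ,
      (1 + |ξ| ^ 2) ^ s₂ * ‖Complex.exp (phi η m n ξ * (t : ℂ))‖ ^ 2 ≤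
        C * Real.exp (c * t) * t ^ (-(2 * alph m n * s₂)) := by
  have hm1 : 1 ≤ m := by rcases hm with rfl | rfl <;> norm_num
  by_cases hev : Even n
  · -- n even : 2 Re φ = −2η|ξ|^m
    have hre : ∀ ξ : ℝ, (phi η m n ξ).re = -η * |ξ| ^ m := by
      intro ξ
      obtain ⟨k, hk⟩ := hev
      have hI : Complex.I ^ (n + 1) = (-1 : ℂ) ^ k * Complex.I := by
        rw [hk, pow_succ, pow_add, ← mul_pow, Complex.I_mul_I]
      have hφ : phi η m n ξ = ((((-η) * (-1) ^ k * (|ξ| * ξ ^ (n-1))) : ℝ) : ℂ) * Complex.I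
          + (((-η * |ξ| ^ m) : ℝ) : ℂ) := by
        rw [phi, hI]; push_cast; ring
      rw [hφ]
      simp only [Complex.add_re, Complex.mul_re, Complex.ofReal_re, Complex.ofReal_im,
        Complex.I_re, Complex.I_im]
      ring
    refine main_aux η m n m hm1 ?_ (2 * η) 0 (by linarith) le_rfl (fun ξ => ?_) s₂ hs₂
    · rw [alph, if_pos (Or.inr hev)]
    · rw [hre ξ]; ring_nf; linarith
  · by_cases h1 : n = 1
    · -- n = 1 : 2 Re φ = 2η|ξ| − 2η|ξ|^m ≤ 4η − η|ξ|^m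
      subst h1
      have hre : ∀ ξ : ℝ, (phi η m 1 ξ).re = η * |ξ| - η * |ξ| ^ m := by
        intro ξ
        have hφ : phi η m 1 ξ = (((η * |ξ| - η * |ξ| ^ m) : ℝ) : ℂ) := by
          rw [phi]
          norm_num [Complex.I_sq]
          push_cast
          ring
        rw [hφ, Complex.ofReal_re]
      refine main_aux η m 1 m hm1 ?_ η (4 * η) hη (by linarith) (fun ξ => ?_) s₂ hs₂
      · rw [alph, if_pos (Or.inl rfl)]
      · rw [hre ξ]
        have hx : 0 ≤ |ξ| := abs_nonneg ξ
        rcases hm with rfl | rfl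
        · nlinarith [sq_nonneg (|ξ| - 1)]
        · nlinarith [sq_nonneg (|ξ| - 1), mul_nonneg hx (sq_nonneg (|ξ| - 1)),
            sq_nonneg (2 * |ξ| - 3)]
    · -- n ≡ 3 (mod 4) : 2 Re φ = −2η(|ξ|^n + |ξ|^m) ≤ −2η|ξ|^n
      have hodd : n % 2 = 1 := Nat.not_even_iff.mp hev
      have h4 : n % 4 = 3 := by
        have h5 := hCond ((n - 5) / 4)
        omega
      obtain ⟨j, hj⟩ : ∃ j, n = 4 * j + 3 := ⟨n / 4, by omega⟩
      have hre : ∀ ξ : ℝ, (phi η m n ξ).re = -η * (|ξ| ^ n + |ξ| ^ m) := by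
        intro ξ
        have hI : Complex.I ^ (n + 1) = 1 := by
          rw [hj, show 4 * j + 3 + 1 = 4 * (j + 1) by ring, pow_mul,
            Complex.I_pow_four, one_pow]
        have habs : |ξ| * ξ ^ (n - 1) = |ξ| ^ n := by
          have he : Even (n - 1) := ⟨2 * j + 1, by omega⟩
          rw [← he.pow_abs, ← pow_succ']
          congr 1
          omega
        have hφ : phi η m n ξ = (((-η * (|ξ| ^ n + |ξ| ^ m)) : ℝ) : ℂ) := by
          rw [phi, hI, one_mul]
          push_cast [← habs]
          ring
        rw [hφ, Complex.ofReal_re]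
      refine main_aux η m n n hn ?_ (2 * η) 0 (by linarith) le_rfl (fun ξ => ?_) s₂ hs₂
      · rw [alph, if_neg (by push_neg; exact ⟨h1, hev⟩)]
      · rw [hre ξ]
        have h1 : (0:ℝ) ≤ |ξ| ^ m := pow_nonneg (abs_nonneg ξ) m
        nlinarith
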